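/- The reduced energy objective is convex in the offloaded load: with the notation of the context, define F(S₁) := inf{ e_UL(t_UL, β_UL·S₁) + ε₀·(S_app − S₁) + k_{rx,1}·t_DL + k_{rx,2}·β_DL·S₁ : t_UL > 0, t_DL ≥ 0, β_UL·S₁ ≤ t_UL·R_UL^max, β_DL·S₁ ≤ t_DL·R_DL^max, t_UL + τ₁·S₁ + t_DL ≤ L_max }. Then F is a convex function of S₁ on the set of S₁ ∈ [0, S_app] for which the constraint set is nonempty, and this set is an interval. -/

import Mathlib

open Matrix
open scoped ComplexOrder

/-- Minimum uplink energy: infimum of `k₁ t + k₂ t · Re(Tr Q)` over positive semidefinite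
transmit covariance matrices `Q` sustaining `s` bits in time `t` over channel `H` with
bandwidth `W`. -/
noncomputable def eUL {nF nMT : ℕ} (H : Matrix (Fin nF) (Fin nMT) ℂ)
    (W k1 k2 : ℝ) (t s : ℝ) : ℝ :=
  sInf { e : ℝ | ∃ Q : Matrix (Fin nMT) (Fin nMT) ℂ, Q.PosSemidef ∧
    s ≤ W * t * Real.logb 2 (((1 : Matrix (Fin nF) (Fin nF) ℂ) + H * Q * Hᴴ).det.re) ∧
    e = k1 * t + k2 * t * (Matrix.trace Q).re }

/-- Reduced energy objective: minimal total energy as a function of the offloaded load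
`S₁`, optimized over the uplink and downlink transmission times subject to the rate and
latency constraints. -/
noncomputable def F {nF nMT : ℕ} (H : Matrix (Fin nF) (Fin nMT) ℂ)
    (W k1 k2 Sapp ε₀ τ₁ βUL βDL RUL RDL krx1 krx2 Lmax : ℝ) (S₁ : ℝ) : ℝ :=
  sInf { e : ℝ | ∃ tUL tDL : ℝ, 0 < tUL ∧ 0 ≤ tDL ∧
    βUL * S₁ ≤ tUL * RUL ∧ βDL * S₁ ≤ tDL * RDL ∧ tUL + τ₁ * S₁ + tDL ≤ Lmax ∧
    e = eUL H W k1 k2 tUL (βUL * S₁) + ε₀ * (Sapp - S₁) + krx1 * tDL +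
      krx2 * (βDL * S₁) }

/-- The set of offloaded loads `S₁ ∈ [0, S_app]` for which the constraint set is
nonempty. -/
def Dom (Sapp τ₁ βUL βDL RUL RDL Lmax : ℝ) : Set ℝ :=
  { S₁ : ℝ | 0 ≤ S₁ ∧ S₁ ≤ Sapp ∧ ∃ tUL tDL : ℝ, 0 < tUL ∧ 0 ≤ tDL ∧
    βUL * S₁ ≤ tUL * RUL ∧ βDL * S₁ ≤ tDL * RDL ∧ tUL + τ₁ * S₁ + tDL ≤ Lmax }

lemma psdSmulReal {n : Type*} [Fintype n] {Q : Matrix n n ℂ} (hQ : Q.PosSemidef)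
    {c : ℝ} (hc : 0 ≤ c) : (((c : ℂ)) • Q).PosSemidef := by
  refine Matrix.PosSemidef.of_dotProduct_mulVec_nonneg ?_ ?_
  · show _ = _
    rw [Matrix.conjTranspose_smul, hQ.1.eq]
    congr 1
    simp [Complex.conj_ofReal]
  · intro x
    rw [Matrix.smul_mulVec, dotProduct_smul, smul_eq_mul]
    exact mul_nonneg (by exact_mod_cast hc) (hQ.dotProduct_mulVec_nonneg x)

lemma psdTraceReNonneg {n : Type*} [Fintype n] [DecidableEq n] {Q : Matrix n n ℂ}
    (hQ : Q.PosSemidef) : 0 ≤ (Matrix.trace Q).re := by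
  have h : ∀ i, 0 ≤ (Q i i).re := by
    intro i
    have := hQ.re_dotProduct_nonneg (Pi.single i 1)
    simpa [dotProduct, Matrix.mulVec, Pi.single_apply] using this
  rw [Matrix.trace]
  rw [Complex.re_sum]
  exact Finset.sum_nonneg fun i _ => h i

lemma infComb {A B : Set ℝ} {c l m : ℝ} (hl : 0 < l) (hm : 0 < m)
    (hA : A.Nonempty) (hB : B.Nonempty)
    (h : ∀ a ∈ A, ∀ b ∈ B, c ≤ l * a + m * b) :
    c ≤ l * sInf A + m * sInf B := by
  have h1 : ∀ a ∈ A, c ≤ l * a + m * sInf B := by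
    intro a ha
    have h2 : (c - l * a) / m ≤ sInf B :=
      le_csInf hB (fun b hb => by rw [div_le_iff₀ hm]; nlinarith [h a ha b hb])
    rw [div_le_iff₀ hm] at h2; nlinarith
  have h2 : (c - m * sInf B) / l ≤ sInf A :=
    le_csInf hA (fun a ha => by rw [div_le_iff₀ hl]; nlinarith [h1 a ha])
  rw [div_le_iff₀ hl] at h2; nlinarith

/-- determinant-real of `θ•1 + (1-θ)•M` dominates `det M ^ (1-θ)` for `M` positive definite. -/
lemma detCombOne {n : Type*} [Fintype n] [DecidableEq n] {M : Matrix n n ℂ} (hM : M.PosDef)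
    {θ : ℝ} (h0 : 0 ≤ θ) (h1 : θ ≤ 1) :
    (M.det.re) ^ (1 - θ) ≤
      (((θ : ℂ)) • (1 : Matrix n n ℂ) + (((1 - θ : ℝ) : ℂ)) • M).det.re := by
  have hμ : ∀ i, 0 < hM.1.eigenvalues i := hM.eigenvalues_pos
  set V : Matrix n n ℂ := (Matrix.IsHermitian.eigenvectorUnitary hM.1 : Matrix n n ℂ) with hV
  have hUnit : V * star V = 1 := (Matrix.mem_unitaryGroup_iff).mp
    (Matrix.IsHermitian.eigenvectorUnitary hM.1).2
  set d : n → ℂ := fun i => (θ : ℂ) + ((1 - θ : ℝ) : ℂ) * (hM.1.eigenvalues i : ℂ) with hd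
  have hdiag : Matrix.diagonal d
      = ((θ : ℂ)) • (1 : Matrix n n ℂ) + (((1 - θ : ℝ) : ℂ)) • Matrix.diagonal
        ((RCLike.ofReal ∘ hM.1.eigenvalues)) := by
    ext i j
    rcases eq_or_ne i j with rfl | hij
    · simp [hd, Matrix.diagonal_apply_eq, Matrix.one_apply_eq]
    · simp [Matrix.diagonal_apply_ne _ hij, Matrix.one_apply_ne hij]
  have hN : ((θ : ℂ)) • (1 : Matrix n n ℂ) + (((1 - θ : ℝ) : ℂ)) • M
      = V * Matrix.diagonal d * star V := by
    rw [hdiag, Matrix.mul_add, Matrix.add_mul, Matrix.mul_smul, Matrix.smul_mul,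
      Matrix.mul_one, hUnit, Matrix.mul_smul, Matrix.smul_mul]
    congr 2
    exact hM.1.spectral_theorem
  rw [hN]
  have hdet : (V * Matrix.diagonal d * star V).det = ∏ i, d i := by
    rw [Matrix.det_mul_right_comm]
    simp [hUnit]
  rw [hdet]
  have hcast : (∏ i, d i) = ((∏ i, (θ + (1 - θ) * hM.1.eigenvalues i) : ℝ) : ℂ) := by
    rw [Complex.ofReal_prod]
    refine Finset.prod_congr rfl fun i _ => ?_
    simp only [hd]
    push_cast
    ring
  rw [hcast, Complex.ofReal_re]
  have step1 : (∏ i, (hM.1.eigenvalues i) ^ (1 - θ))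
      ≤ ∏ i, (θ + (1 - θ) * hM.1.eigenvalues i) := by
    apply Finset.prod_le_prod
    · intro i _
      exact Real.rpow_nonneg (hμ i).le _
    · intro i _
      have := Real.geom_mean_le_arith_mean2_weighted h0 (by linarith : (0:ℝ) ≤ 1 - θ)
        zero_le_one (hμ i).le (by ring)
      simpa [Real.one_rpow] using this
  have step2 : (∏ i, (hM.1.eigenvalues i) ^ (1 - θ))
      = (∏ i, hM.1.eigenvalues i) ^ (1 - θ) :=
    Real.finset_prod_rpow _ _ (fun i _ => (hμ i).le) _
  have step3 : M.det.re = ∏ i, hM.1.eigenvalues i := by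
    rw [hM.1.det_eq_prod_eigenvalues]
    norm_cast
  rw [step3, ← step2]
  exact step1

section
open scoped MatrixOrder

/-- Log-concavity (multiplicative form) of the determinant on positive definite
complex matrices. -/
lemma detComb {n : Type*} [Fintype n] [DecidableEq n] {A B : Matrix n n ℂ}
    (hA : A.PosDef) (hB : B.PosDef) {θ : ℝ} (h0 : 0 ≤ θ) (h1 : θ ≤ 1) :
    A.det.re ^ θ * B.det.re ^ (1 - θ) ≤
      (((θ : ℂ)) • A + (((1 - θ : ℝ) : ℂ)) • B).det.re := by
  set S := CFC.sqrt A with hSdef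
  have hSS : S * S = A := CFC.sqrt_mul_sqrt_self A hA.posSemidef.nonneg
  have hSherm : S.IsHermitian := (Matrix.nonneg_iff_posSemidef.mp (CFC.sqrt_nonneg A)).1
  have hdetS : S.det * S.det = A.det := by rw [← Matrix.det_mul, hSS]
  have hdetA_pos : (0 : ℂ) < A.det := hA.det_pos
  have hdetA_ne : A.det ≠ 0 := hdetA_pos.ne'
  have hdetS_ne : S.det ≠ 0 := by
    intro h; apply hdetA_ne; rw [← hdetS, h, mul_zero]
  have hSunit : IsUnit S.det := hdetS_ne.isUnit
  have hSS' : S * S⁻¹ = 1 := Matrix.mul_nonsing_inv _ hSunit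
  have hS'S : S⁻¹ * S = 1 := Matrix.nonsing_inv_mul _ hSunit
  have hSinvherm : (S⁻¹).IsHermitian := by
    show _ = _
    rw [Matrix.conjTranspose_nonsing_inv, hSherm.eq]
  set M := S⁻¹ * B * S⁻¹ with hMdef
  have hMherm : M.IsHermitian := by
    show _ = _
    rw [hMdef, Matrix.conjTranspose_mul, Matrix.conjTranspose_mul, hSinvherm.eq, hB.1.eq,
      Matrix.mul_assoc]
  have hMpd : M.PosDef := by
    refine Matrix.PosDef.of_dotProduct_mulVec_pos hMherm (fun x hx => ?_)
    have hy : S⁻¹ *ᵥ x ≠ 0 := by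
      intro h
      apply hx
      have : S *ᵥ (S⁻¹ *ᵥ x) = x := by
        rw [Matrix.mulVec_mulVec, hSS', Matrix.one_mulVec]
      rw [h, Matrix.mulVec_zero] at this
      exact this.symm
    have hBpos := hB.dotProduct_mulVec_pos hy
    have hre : star x ⬝ᵥ M *ᵥ x = star (S⁻¹ *ᵥ x) ⬝ᵥ B *ᵥ (S⁻¹ *ᵥ x) := by
      rw [Matrix.star_mulVec, hMdef, ← Matrix.mulVec_mulVec, ← Matrix.mulVec_mulVec,
        Matrix.dotProduct_mulVec (star x), hSinvherm.eq, Matrix.dotProduct_mulVec]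
    rw [hre]
    exact hBpos
  have hkey : ((θ : ℂ)) • A + (((1 - θ : ℝ) : ℂ)) • B
      = S * (((θ : ℂ)) • (1 : Matrix n n ℂ) + (((1 - θ : ℝ) : ℂ)) • M) * S := by
    rw [Matrix.mul_add, Matrix.add_mul, Matrix.mul_smul, Matrix.smul_mul, Matrix.mul_one,
      hSS, Matrix.mul_smul, Matrix.smul_mul]
    congr 2
    rw [hMdef, show S * (S⁻¹ * B * S⁻¹) * S = (S * S⁻¹) * B * (S⁻¹ * S) by
      simp only [Matrix.mul_assoc], hSS', hS'S, Matrix.one_mul, Matrix.mul_one]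
  -- determinants
  set N := ((θ : ℂ)) • (1 : Matrix n n ℂ) + (((1 - θ : ℝ) : ℂ)) • M with hNdef
  have hdet1 : (((θ : ℂ)) • A + (((1 - θ : ℝ) : ℂ)) • B).det = A.det * N.det := by
    rw [hkey, Matrix.det_mul, Matrix.det_mul, ← hdetS]
    ring
  have hdetB_pos : (0 : ℂ) < B.det := hB.det_pos
  set a := A.det.re with ha_def
  set b := B.det.re with hb_def
  have ha : 0 < a := (Complex.pos_iff.mp hdetA_pos).1
  have hb : 0 < b := (Complex.pos_iff.mp hdetB_pos).1
  have hA_reval : A.det = ((a : ℝ) : ℂ) :=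
    Complex.ext rfl ((Complex.pos_iff.mp hdetA_pos).2).symm
  have hB_reval : B.det = ((b : ℝ) : ℂ) :=
    Complex.ext rfl ((Complex.pos_iff.mp hdetB_pos).2).symm
  have hdetM : M.det = B.det / A.det := by
    rw [hMdef, Matrix.det_mul, Matrix.det_mul, Matrix.det_nonsing_inv, Ring.inverse_eq_inv,
      ← hdetS]
    field_simp
  have hMre : M.det.re = b / a := by
    rw [hdetM, hA_reval, hB_reval, ← Complex.ofReal_div]
    exact Complex.ofReal_re _
  have hone := detCombOne hMpd h0 h1
  rw [hMre] at hone
  have hprod : (((θ : ℂ)) • A + (((1 - θ : ℝ) : ℂ)) • B).det.re = a * N.det.re := by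
    rw [hdet1, hA_reval]
    simp [Complex.mul_re]
  rw [hprod]
  have hrw : (b / a) ^ (1 - θ) = b ^ (1 - θ) / a ^ (1 - θ) := Real.div_rpow hb.le ha.le (1 - θ)
  have haa : a ^ θ * a ^ (1 - θ) = a := by
    rw [← Real.rpow_add ha]
    norm_num
  have hapow : (0 : ℝ) < a ^ (1 - θ) := Real.rpow_pos_of_pos ha _
  have heq : a ^ θ * b ^ (1 - θ) = a * (b / a) ^ (1 - θ) := by
    rw [hrw]
    rw [mul_div_assoc', eq_div_iff hapow.ne']
    linear_combination b ^ (1 - θ) * haa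
  rw [heq]
  exact mul_le_mul_of_nonneg_left hone ha.le

end

lemma logbDetComb {n : Type*} [Fintype n] [DecidableEq n] {A B : Matrix n n ℂ}
    (hA : A.PosDef) (hB : B.PosDef) {θ : ℝ} (h0 : 0 ≤ θ) (h1 : θ ≤ 1) :
    θ * Real.logb 2 A.det.re + (1 - θ) * Real.logb 2 B.det.re ≤
      Real.logb 2 ((((θ : ℂ)) • A + (((1 - θ : ℝ) : ℂ)) • B).det.re) := by
  have ha : 0 < A.det.re := (Complex.pos_iff.mp hA.det_pos).1
  have hb : 0 < B.det.re := (Complex.pos_iff.mp hB.det_pos).1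
  have key := detComb hA hB h0 h1
  have hpa : (0:ℝ) < A.det.re ^ θ := Real.rpow_pos_of_pos ha _
  have hpb : (0:ℝ) < B.det.re ^ (1 - θ) := Real.rpow_pos_of_pos hb _
  have hmono := Real.logb_le_logb_of_le (by norm_num : (1:ℝ) < 2) (mul_pos hpa hpb) key
  calc θ * Real.logb 2 A.det.re + (1 - θ) * Real.logb 2 B.det.re
      = Real.logb 2 (A.det.re ^ θ * B.det.re ^ (1 - θ)) := by
        rw [Real.logb_mul hpa.ne' hpb.ne', Real.logb_rpow_eq_mul_logb_of_pos ha,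
          Real.logb_rpow_eq_mul_logb_of_pos hb]
    _ ≤ _ := hmono

/-- For a nonzero channel matrix every rate is feasible. -/
lemma eULFeasible {nF nMT : ℕ} {H : Matrix (Fin nF) (Fin nMT) ℂ} (hH : H ≠ 0)
    {W t : ℝ} (hW : 0 < W) (ht : 0 < t) (s : ℝ) :
    ∃ Q : Matrix (Fin nMT) (Fin nMT) ℂ, Q.PosSemidef ∧
      s ≤ W * t * Real.logb 2 (((1 : Matrix (Fin nF) (Fin nF) ℂ) + H * Q * Hᴴ).det.re) := by
  obtain ⟨i, j, hij⟩ : ∃ i j, H i j ≠ 0 := by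
    by_contra hc
    push_neg at hc
    exact hH (by ext i j; simpa using hc i j)
  set r : ℝ := ∑ k, Complex.normSq (H k j) with hr_def
  have hr : 0 < r := by
    apply Finset.sum_pos' (fun k _ => Complex.normSq_nonneg _)
    exact ⟨i, Finset.mem_univ i, Complex.normSq_pos.mpr hij⟩
  set m : ℝ := max (s / (W * t)) 0 with hm_def
  have hm0 : 0 ≤ m := le_max_right _ _
  have h2m : (1:ℝ) ≤ 2 ^ m := by
    have := Real.rpow_le_rpow_of_exponent_le (by norm_num : (1:ℝ) ≤ 2) hm0
    rwa [Real.rpow_zero] at this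
  set c : ℝ := (2 ^ m - 1) / r with hc_def
  have hc : 0 ≤ c := div_nonneg (by linarith) hr.le
  refine ⟨Matrix.diagonal (Pi.single j ((c : ℂ))), ?_, ?_⟩
  · refine Matrix.posSemidef_diagonal_iff.mpr fun k => ?_
    rcases eq_or_ne k j with rfl | hkj
    · simp only [Pi.single_eq_same]
      exact Complex.zero_le_real.mpr hc
    · simp [Pi.single_eq_of_ne hkj]
  · have hform : H * Matrix.diagonal (Pi.single j ((c : ℂ))) * Hᴴ
        = Matrix.replicateCol Unit (fun k => (c : ℂ) * H k j) * Matrix.replicateRow Unit (fun l => star (H l j)) := by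
      have hR : ∀ k l, (Matrix.replicateCol Unit (fun k => (c : ℂ) * H k j)
          * Matrix.replicateRow Unit (fun l => star (H l j))) k l
          = ((c : ℂ) * H k j) * star (H l j) := by
        intro k l
        rw [Matrix.mul_apply]
        simp
      ext k l
      rw [hR, Matrix.mul_apply, Finset.sum_eq_single j]
      · simp only [Matrix.mul_diagonal, Matrix.conjTranspose_apply, Pi.single_eq_same]
        ring
      · intro p _ hpj
        simp [Matrix.mul_diagonal, Pi.single_eq_of_ne hpj]
      · intro h
        exact absurd (Finset.mem_univ j) h
    have hdet : ((1 : Matrix (Fin nF) (Fin nF) ℂ) + H * Matrix.diagonal (Pi.single j ((c : ℂ))) * Hᴴ).det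
        = ((1 + c * r : ℝ) : ℂ) := by
      rw [hform, Matrix.det_one_add_replicateCol_mul_replicateRow]
      have : ((fun l => star (H l j)) ⬝ᵥ (fun k => (c : ℂ) * H k j))
          = ((c * r : ℝ) : ℂ) := by
        simp only [dotProduct, hr_def]
        push_cast
        rw [Finset.mul_sum]
        refine Finset.sum_congr rfl fun l _ => ?_
        rw [Complex.star_def, Complex.normSq_eq_conj_mul_self]
        ring
      rw [this]
      push_cast
      ring
    rw [hdet, Complex.ofReal_re]
    have hcr : 1 + c * r = 2 ^ m := by
      rw [hc_def, div_mul_cancel₀ _ hr.ne']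
      ring
    rw [hcr, Real.logb_rpow (by norm_num) (by norm_num)]
    rcases le_or_gt s 0 with hs | hs
    · exact hs.trans (by positivity)
    · have : s / (W * t) ≤ m := le_max_left _ _
      rw [div_le_iff₀ (by positivity)] at this
      nlinarith

lemma eULBdd {nF nMT : ℕ} (H : Matrix (Fin nF) (Fin nMT) ℂ)
    (W k1 k2 t s : ℝ) (hk1 : 0 ≤ k1) (hk2 : 0 ≤ k2) (ht : 0 ≤ t) :
    BddBelow { e : ℝ | ∃ Q : Matrix (Fin nMT) (Fin nMT) ℂ, Q.PosSemidef ∧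
      s ≤ W * t * Real.logb 2 (((1 : Matrix (Fin nF) (Fin nF) ℂ) + H * Q * Hᴴ).det.re) ∧
      e = k1 * t + k2 * t * (Matrix.trace Q).re } := by
  refine ⟨0, ?_⟩
  rintro e ⟨Q, hQ, -, rfl⟩
  exact add_nonneg (mul_nonneg hk1 ht)
    (mul_nonneg (mul_nonneg hk2 ht) (psdTraceReNonneg hQ))

lemma eULNonneg {nF nMT : ℕ} (H : Matrix (Fin nF) (Fin nMT) ℂ)
    (W k1 k2 t s : ℝ) (hk1 : 0 ≤ k1) (hk2 : 0 ≤ k2) (ht : 0 ≤ t) :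
    0 ≤ eUL H W k1 k2 t s := by
  apply Real.sInf_nonneg
  rintro e ⟨Q, hQ, -, rfl⟩
  exact add_nonneg (mul_nonneg hk1 ht)
    (mul_nonneg (mul_nonneg hk2 ht) (psdTraceReNonneg hQ))

lemma eULZero {nF nMT : ℕ} {W k1 k2 t s : ℝ} (hk1 : 0 ≤ k1) (hk2 : 0 ≤ k2) (ht : 0 ≤ t)
    (hs : s ≤ 0) :
    eUL (0 : Matrix (Fin nF) (Fin nMT) ℂ) W k1 k2 t s = k1 * t := by
  unfold eUL
  apply le_antisymm
  · apply csInf_le (eULBdd _ _ _ _ _ _ hk1 hk2 ht)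
    refine ⟨0, Matrix.PosSemidef.zero, ?_, by simp⟩
    simpa using hs
  · apply le_csInf
    · refine ⟨k1 * t, 0, Matrix.PosSemidef.zero, ?_, by simp⟩
      simpa using hs
    · rintro e ⟨Q, hQ, -, rfl⟩
      nlinarith [psdTraceReNonneg hQ, mul_nonneg (mul_nonneg hk2 ht) (psdTraceReNonneg hQ)]

lemma eULZeroPos {nF nMT : ℕ} {W k1 k2 t s : ℝ} (hW : 0 < W) (ht : 0 < t) (hs : 0 < s) :
    eUL (0 : Matrix (Fin nF) (Fin nMT) ℂ) W k1 k2 t s = 0 := by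
  unfold eUL
  convert Real.sInf_empty
  rw [Set.eq_empty_iff_forall_notMem]
  rintro e ⟨Q, hQ, hfe, -⟩
  simp only [Matrix.zero_mul, Matrix.mul_zero, add_zero, Matrix.det_one, Complex.one_re,
    Real.logb_one, mul_zero] at hfe
  exact absurd hfe (not_le.mpr hs)

lemma eULConvex {nF nMT : ℕ} (H : Matrix (Fin nF) (Fin nMT) ℂ)
    {W k1 k2 ta tb sa sb l m : ℝ}
    (hW : 0 < W) (hk1 : 0 ≤ k1) (hk2 : 0 < k2)
    (hta : 0 < ta) (htb : 0 < tb) (hsa : 0 ≤ sa) (hsb : 0 ≤ sb)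
    (hl : 0 < l) (hm : 0 < m) (hlm : l + m = 1) :
    eUL H W k1 k2 (l * ta + m * tb) (l * sa + m * sb)
      ≤ l * eUL H W k1 k2 ta sa + m * eUL H W k1 k2 tb sb := by
  rcases eq_or_ne H 0 with rfl | hH
  · by_cases hs : sa = 0 ∧ sb = 0
    · obtain ⟨rfl, rfl⟩ := hs
      rw [eULZero hk1 hk2.le (by positivity) (by norm_num),
        eULZero hk1 hk2.le hta.le le_rfl, eULZero hk1 hk2.le htb.le le_rfl]
      exact le_of_eq (by ring)
    · have hs' : 0 < l * sa + m * sb := by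
        rcases not_and_or.mp hs with h | h
        · have : 0 < sa := lt_of_le_of_ne hsa (Ne.symm h)
          nlinarith [mul_nonneg hm.le hsb]
        · have : 0 < sb := lt_of_le_of_ne hsb (Ne.symm h)
          nlinarith [mul_nonneg hl.le hsa]
      rw [eULZeroPos hW (by positivity) hs']
      exact add_nonneg (mul_nonneg hl.le (eULNonneg _ _ _ _ _ _ hk1 hk2.le hta.le))
        (mul_nonneg hm.le (eULNonneg _ _ _ _ _ _ hk1 hk2.le htb.le))
  · unfold eUL
    have hNEa : ∃ e, e ∈ { e : ℝ | ∃ Q : Matrix (Fin nMT) (Fin nMT) ℂ, Q.PosSemidef ∧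
        sa ≤ W * ta * Real.logb 2 (((1 : Matrix (Fin nF) (Fin nF) ℂ) + H * Q * Hᴴ).det.re) ∧
        e = k1 * ta + k2 * ta * (Matrix.trace Q).re } := by
      obtain ⟨Q, hQ, hfe⟩ := eULFeasible hH hW hta sa
      exact ⟨_, Q, hQ, hfe, rfl⟩
    have hNEb : ∃ e, e ∈ { e : ℝ | ∃ Q : Matrix (Fin nMT) (Fin nMT) ℂ, Q.PosSemidef ∧
        sb ≤ W * tb * Real.logb 2 (((1 : Matrix (Fin nF) (Fin nF) ℂ) + H * Q * Hᴴ).det.re) ∧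
        e = k1 * tb + k2 * tb * (Matrix.trace Q).re } := by
      obtain ⟨Q, hQ, hfe⟩ := eULFeasible hH hW htb sb
      exact ⟨_, Q, hQ, hfe, rfl⟩
    apply infComb hl hm hNEa hNEb
    rintro ea ⟨Qa, hQa, hfa, rfl⟩ eb ⟨Qb, hQb, hfb, rfl⟩
    set tc := l * ta + m * tb with htc
    have htc0 : 0 < tc := by positivity
    set θ := l * ta / tc with hθ
    have hθ0 : 0 < θ := by positivity
    have hθ1 : θ < 1 := by
      rw [hθ, div_lt_one htc0]
      nlinarith [mul_pos hm htb]
    have hth : tc * θ = l * ta := by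
      rw [hθ]; field_simp
    have hth' : tc * (1 - θ) = m * tb := by
      have := hth
      nlinarith [htc]
    clear_value θ tc
    set Qc := ((θ : ℂ)) • Qa + (((1 - θ : ℝ) : ℂ)) • Qb with hQc
    have hQcpsd : Qc.PosSemidef := (psdSmulReal hQa hθ0.le).add (psdSmulReal hQb (by linarith))
    have hAa : ((1 : Matrix (Fin nF) (Fin nF) ℂ) + H * Qa * Hᴴ).PosDef :=
      Matrix.PosDef.add_posSemidef Matrix.PosDef.one (hQa.mul_mul_conjTranspose_same H)
    have hAb : ((1 : Matrix (Fin nF) (Fin nF) ℂ) + H * Qb * Hᴴ).PosDef :=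
      Matrix.PosDef.add_posSemidef Matrix.PosDef.one (hQb.mul_mul_conjTranspose_same H)
    have hcomb : ((θ : ℂ)) • ((1 : Matrix (Fin nF) (Fin nF) ℂ) + H * Qa * Hᴴ)
          + (((1 - θ : ℝ) : ℂ)) • ((1 : Matrix (Fin nF) (Fin nF) ℂ) + H * Qb * Hᴴ)
        = (1 : Matrix (Fin nF) (Fin nF) ℂ) + H * Qc * Hᴴ := by
      rw [hQc, Matrix.mul_add, Matrix.add_mul, Matrix.mul_smul, Matrix.smul_mul,
        Matrix.mul_smul, Matrix.smul_mul]
      push_cast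
      module
    have hconc := logbDetComb hAa hAb hθ0.le hθ1.le
    rw [hcomb] at hconc
    have hfeas : l * sa + m * sb ≤ W * tc *
        Real.logb 2 (((1 : Matrix (Fin nF) (Fin nF) ℂ) + H * Qc * Hᴴ).det.re) := by
      set La := Real.logb 2 (((1 : Matrix (Fin nF) (Fin nF) ℂ) + H * Qa * Hᴴ).det.re) with hLa
      set Lb := Real.logb 2 (((1 : Matrix (Fin nF) (Fin nF) ℂ) + H * Qb * Hᴴ).det.re) with hLb
      set Lc := Real.logb 2 (((1 : Matrix (Fin nF) (Fin nF) ℂ) + H * Qc * Hᴴ).det.re) with hLc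
      have e1 : l * sa ≤ l * (W * ta * La) := mul_le_mul_of_nonneg_left hfa hl.le
      have e2 : m * sb ≤ m * (W * tb * Lb) := mul_le_mul_of_nonneg_left hfb hm.le
      have e3 : W * tc * (θ * La + (1 - θ) * Lb) ≤ W * tc * Lc :=
        mul_le_mul_of_nonneg_left hconc (by positivity)
      have e4 : l * (W * ta * La) + m * (W * tb * Lb) = W * tc * (θ * La + (1 - θ) * Lb) := by
        linear_combination (-(W * La)) * hth + (-(W * Lb)) * hth'
      linarith
    have htr : (Matrix.trace Qc).re
        = θ * (Matrix.trace Qa).re + (1 - θ) * (Matrix.trace Qb).re := by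
      rw [hQc, Matrix.trace_add, Matrix.trace_smul, Matrix.trace_smul]
      simp [smul_eq_mul, Complex.add_re, Complex.mul_re, Complex.ofReal_re, Complex.ofReal_im]
    have hcost : k1 * tc + k2 * tc * (Matrix.trace Qc).re
        = l * (k1 * ta + k2 * ta * (Matrix.trace Qa).re)
          + m * (k1 * tb + k2 * tb * (Matrix.trace Qb).re) := by
      rw [htr]
      linear_combination (k2 * (Matrix.trace Qa).re) * hth + (k2 * (Matrix.trace Qb).re) * hth'
        + k1 * htc
    exact le_trans
      (csInf_le (eULBdd H W k1 k2 tc (l * sa + m * sb) hk1 hk2.le htc0.le)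
        ⟨Qc, hQcpsd, hfeas, rfl⟩)
      (le_of_eq hcost)

/-- The reduced energy objective `F` is convex on the set of feasible offloaded loads,
and this set is an interval (a convex subset of `ℝ`). -/
theorem reduced_objective_convex
    (nF nMT : ℕ) (H : Matrix (Fin nF) (Fin nMT) ℂ)
    (W k1 k2 Sapp ε₀ τ₁ βUL βDL RUL RDL krx1 krx2 Lmax : ℝ)
    (hW : 0 < W) (hk1 : 0 ≤ k1) (hk2 : 0 < k2)
    (hSapp : 0 < Sapp) (hε₀ : 0 < ε₀) (hτ₁ : 0 < τ₁)
    (hβUL : 1 ≤ βUL) (hβDL : 0 < βDL) (hRUL : 0 < RUL) (hRDL : 0 < RDL)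
    (hkrx1 : 0 ≤ krx1) (hkrx2 : 0 ≤ krx2) (hLmax : 0 < Lmax) :
    ConvexOn ℝ (Dom Sapp τ₁ βUL βDL RUL RDL Lmax)
      (F H W k1 k2 Sapp ε₀ τ₁ βUL βDL RUL RDL krx1 krx2 Lmax) ∧
    Convex ℝ (Dom Sapp τ₁ βUL βDL RUL RDL Lmax) := by
  have domconv : Convex ℝ (Dom Sapp τ₁ βUL βDL RUL RDL Lmax) := by
    rintro x ⟨hx0, hxS, tx, dx, htx, hdx, hx1, hx2, hx3⟩
      y ⟨hy0, hyS, ty, dy, hty, hdy, hy1, hy2, hy3⟩ l m hl hm hlm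
    simp only [smul_eq_mul]
    refine ⟨add_nonneg (mul_nonneg hl hx0) (mul_nonneg hm hy0), by nlinarith,
      l * tx + m * ty, l * dx + m * dy, ?_,
      add_nonneg (mul_nonneg hl hdx) (mul_nonneg hm hdy), ?_, ?_, ?_⟩
    · rcases lt_or_eq_of_le hl with h | h
      · nlinarith [mul_pos h htx, mul_nonneg hm hty.le]
      · have hm1 : m = 1 := by linarith
        rw [← h, hm1]
        simpa using hty
    · calc βUL * (l * x + m * y) = l * (βUL * x) + m * (βUL * y) := by ring
        _ ≤ l * (tx * RUL) + m * (ty * RUL) :=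
          add_le_add (mul_le_mul_of_nonneg_left hx1 hl) (mul_le_mul_of_nonneg_left hy1 hm)
        _ = (l * tx + m * ty) * RUL := by ring
    · calc βDL * (l * x + m * y) = l * (βDL * x) + m * (βDL * y) := by ring
        _ ≤ l * (dx * RDL) + m * (dy * RDL) :=
          add_le_add (mul_le_mul_of_nonneg_left hx2 hl) (mul_le_mul_of_nonneg_left hy2 hm)
        _ = (l * dx + m * dy) * RDL := by ring
    · calc l * tx + m * ty + τ₁ * (l * x + m * y) + (l * dx + m * dy)
          = l * (tx + τ₁ * x + dx) + m * (ty + τ₁ * y + dy) := by ring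
        _ ≤ l * Lmax + m * Lmax :=
          add_le_add (mul_le_mul_of_nonneg_left hx3 hl) (mul_le_mul_of_nonneg_left hy3 hm)
        _ = Lmax := by rw [← add_mul, hlm, one_mul]
  refine ⟨⟨domconv, ?_⟩, domconv⟩
  intro x hx y hy l m hl hm hlm
  simp only [smul_eq_mul]
  rcases eq_or_lt_of_le hl with rfl | hl'
  · have hm1 : m = 1 := by linarith
    subst hm1
    rw [show (0:ℝ) * x + 1 * y = y by ring]
    norm_num
  rcases eq_or_lt_of_le hm with rfl | hm'
  · have hl1 : l = 1 := by linarith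
    subst hl1
    rw [show (1:ℝ) * x + 0 * y = x by ring]
    norm_num
  obtain ⟨hx0, hxS, tx, dx, htx, hdx, hx1, hx2, hx3⟩ := hx
  obtain ⟨hy0, hyS, ty, dy, hty, hdy, hy1, hy2, hy3⟩ := hy
  unfold F
  refine infComb hl' hm' ⟨_, tx, dx, htx, hdx, hx1, hx2, hx3, rfl⟩
    ⟨_, ty, dy, hty, hdy, hy1, hy2, hy3, rfl⟩ ?_
  rintro ea ⟨ta, da, hta, hda, ha1, ha2, ha3, rfl⟩ eb ⟨tb, db, htb, hdb, hb1, hb2, hb3, rfl⟩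
  set c := l * x + m * y with hc
  -- constraints for the combined point
  have hcon1 : βUL * c ≤ (l * ta + m * tb) * RUL := by
    calc βUL * c = l * (βUL * x) + m * (βUL * y) := by rw [hc]; ring
      _ ≤ l * (ta * RUL) + m * (tb * RUL) :=
        add_le_add (mul_le_mul_of_nonneg_left ha1 hl) (mul_le_mul_of_nonneg_left hb1 hm)
      _ = (l * ta + m * tb) * RUL := by ring
  have hcon2 : βDL * c ≤ (l * da + m * db) * RDL := by
    calc βDL * c = l * (βDL * x) + m * (βDL * y) := by rw [hc]; ring
      _ ≤ l * (da * RDL) + m * (db * RDL) :=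
        add_le_add (mul_le_mul_of_nonneg_left ha2 hl) (mul_le_mul_of_nonneg_left hb2 hm)
      _ = (l * da + m * db) * RDL := by ring
  have hcon3 : (l * ta + m * tb) + τ₁ * c + (l * da + m * db) ≤ Lmax := by
    calc (l * ta + m * tb) + τ₁ * c + (l * da + m * db)
        = l * (ta + τ₁ * x + da) + m * (tb + τ₁ * y + db) := by rw [hc]; ring
      _ ≤ l * Lmax + m * Lmax :=
        add_le_add (mul_le_mul_of_nonneg_left ha3 hl) (mul_le_mul_of_nonneg_left hb3 hm)
      _ = Lmax := by rw [← add_mul, hlm, one_mul]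
  have htc : (0:ℝ) < l * ta + m * tb := by positivity
  have hbdd : BddBelow { e : ℝ | ∃ tUL tDL : ℝ, 0 < tUL ∧ 0 ≤ tDL ∧
      βUL * c ≤ tUL * RUL ∧ βDL * c ≤ tDL * RDL ∧ tUL + τ₁ * c + tDL ≤ Lmax ∧
      e = eUL H W k1 k2 tUL (βUL * c) + ε₀ * (Sapp - c) + krx1 * tDL +
        krx2 * (βDL * c) } := by
    refine ⟨ε₀ * (Sapp - c) + krx2 * (βDL * c), ?_⟩
    rintro e ⟨tU, tD, htU, htD, -, -, -, rfl⟩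
    have h1 : 0 ≤ eUL H W k1 k2 tU (βUL * c) := eULNonneg _ _ _ _ _ _ hk1 hk2.le htU.le
    have h2 : 0 ≤ krx1 * tD := mul_nonneg hkrx1 htD
    linarith
  have hmem : eUL H W k1 k2 (l * ta + m * tb) (βUL * c) + ε₀ * (Sapp - c)
      + krx1 * (l * da + m * db) + krx2 * (βDL * c) ∈
      { e : ℝ | ∃ tUL tDL : ℝ, 0 < tUL ∧ 0 ≤ tDL ∧
        βUL * c ≤ tUL * RUL ∧ βDL * c ≤ tDL * RDL ∧ tUL + τ₁ * c + tDL ≤ Lmax ∧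
        e = eUL H W k1 k2 tUL (βUL * c) + ε₀ * (Sapp - c) + krx1 * tDL +
          krx2 * (βDL * c) } :=
    ⟨l * ta + m * tb, l * da + m * db, htc,
      add_nonneg (mul_nonneg hl hda) (mul_nonneg hm hdb), hcon1, hcon2, hcon3, rfl⟩
  refine le_trans (csInf_le hbdd hmem) ?_
  have hkey : eUL H W k1 k2 (l * ta + m * tb) (l * (βUL * x) + m * (βUL * y))
      ≤ l * eUL H W k1 k2 ta (βUL * x) + m * eUL H W k1 k2 tb (βUL * y) :=
    eULConvex H hW hk1 hk2 hta htb
      (mul_nonneg (by linarith) hx0) (mul_nonneg (by linarith) hy0) hl' hm' hlm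
  rw [show βUL * c = l * (βUL * x) + m * (βUL * y) by rw [hc]; ring]
  calc eUL H W k1 k2 (l * ta + m * tb) (l * (βUL * x) + m * (βUL * y)) + ε₀ * (Sapp - c)
        + krx1 * (l * da + m * db) + krx2 * (βDL * c)
      ≤ (l * eUL H W k1 k2 ta (βUL * x) + m * eUL H W k1 k2 tb (βUL * y)) + ε₀ * (Sapp - c)
        + krx1 * (l * da + m * db) + krx2 * (βDL * c) := by linarith
    _ = l * (eUL H W k1 k2 ta (βUL * x) + ε₀ * (Sapp - x) + krx1 * da + krx2 * (βDL * x))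
        + m * (eUL H W k1 k2 tb (βUL * y) + ε₀ * (Sapp - y) + krx1 * db + krx2 * (βDL * y)) := by
        rw [hc]
        linear_combination (-(ε₀ * Sapp)) * hlm
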